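/- Let r0 > 0. For ε > 0 define u_ε : ℝ² → ℝ by u_ε(x) = log(ε²/((ε² + ‖x‖²)²)) and v_ε = u_ε − (π·r0²)⁻¹·∫_B u_ε(x) dx. There exists a constant C > 0 such that for every ε ∈ (0,1], |log(∫_B e^{v_ε(x)} dx) − log(1/ε²)| ≤ C. -/

import Mathlib

open Real

/-- The Liouville bubble u_ε on ℝ². -/
noncomputable def bubble (ε : ℝ) (x : EuclideanSpace ℝ (Fin 2)) : ℝ :=
  Real.log (ε ^ 2 / (ε ^ 2 + ‖x‖ ^ 2) ^ 2)

/-- The normalized bubble v_ε = u_ε − (π r0²)⁻¹ ∫_B u_ε. -/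
noncomputable def nbubble (r0 ε : ℝ) (x : EuclideanSpace ℝ (Fin 2)) : ℝ :=
  bubble ε x -
    (π * r0 ^ 2)⁻¹ * ∫ y in Metric.ball (0 : EuclideanSpace ℝ (Fin 2)) r0, bubble ε y

section Aux

open MeasureTheory Metric Set

local notation "E2" => EuclideanSpace ℝ (Fin 2)

lemma vol_ball2 (r : ℝ) (hr : 0 ≤ r) :
    (volume (Metric.ball (0 : E2) r)).toReal = π * r ^ 2 := by
  rw [EuclideanSpace.volume_ball]
  simp only [Fintype.card_fin]
  norm_num
  rw [ENNReal.toReal_ofReal hr, Real.sq_sqrt Real.pi_nonneg]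
  ring

lemma polar2 (r0 : ℝ) (hr : 0 < r0) (g : ℝ → ℝ) :
    ∫ x in Metric.ball (0 : E2) r0, g ‖x‖ =
      (2 * π) * ∫ r in (0:ℝ)..r0, r * g r := by
  have h1 : ∫ x in Metric.ball (0 : E2) r0, g ‖x‖
      = ∫ x : E2, (Set.Iio r0).indicator g ‖x‖ := by
    rw [← MeasureTheory.integral_indicator measurableSet_ball]
    congr 1
    funext x
    by_cases h : ‖x‖ < r0 <;>
      simp [Set.indicator_apply, mem_ball_zero_iff, Set.mem_Iio, h]
  rw [h1, MeasureTheory.integral_fun_norm_addHaar volume ((Set.Iio r0).indicator g)]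
  rw [finrank_euclideanSpace_fin]
  have h2 : ∀ y : ℝ, y ^ (2 - 1) • (Set.Iio r0).indicator g y
      = (Set.Iio r0).indicator (fun y => y * g y) y := by
    intro y
    by_cases h : y < r0 <;> simp [Set.indicator_apply, Set.mem_Iio, h]
  simp only [h2]
  rw [MeasureTheory.integral_indicator measurableSet_Iio,
    Measure.restrict_restrict measurableSet_Iio, Set.Iio_inter_Ioi,
    ← MeasureTheory.integral_Ioc_eq_integral_Ioo,
    ← intervalIntegral.integral_of_le hr.le, measureReal_def, vol_ball2 1 zero_le_one]
  simp only [smul_eq_mul, nsmul_eq_mul]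
  push_cast
  ring

lemma intA (t r0 : ℝ) (ht : 0 < t) (hr : 0 < r0) :
    ∫ r in (0:ℝ)..r0, r * (t / (t + r ^ 2) ^ 2) = r0 ^ 2 / (2 * (t + r0 ^ 2)) := by
  have hderiv : ∀ r ∈ Set.uIcc (0:ℝ) r0,
      HasDerivAt (fun r : ℝ => -t / (2 * (t + r ^ 2)))
        (r * (t / (t + r ^ 2) ^ 2)) r := by
    intro r _
    have hne : (2 * (t + r ^ 2)) ≠ 0 := by positivity
    have h1 : HasDerivAt (fun r : ℝ => 2 * (t + r ^ 2)) (2 * (2 * r)) r := by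
      have := ((hasDerivAt_pow 2 r).const_add t).const_mul 2
      simpa using this
    have h2 := (hasDerivAt_const r (-t)).div h1 hne
    refine h2.congr_deriv ?_
    field_simp
    ring
  have hcont : Continuous fun r : ℝ => r * (t / (t + r ^ 2) ^ 2) := by
    apply continuous_id.mul
    apply continuous_const.div
    · fun_prop
    · intro r; positivity
  rw [intervalIntegral.integral_eq_sub_of_hasDerivAt hderiv
    (hcont.intervalIntegrable 0 r0)]
  field_simp
  ring

lemma intB (t r0 : ℝ) (ht : 0 < t) :
    ∫ r in (0:ℝ)..r0, r * Real.log (t + r ^ 2)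
      = ((t + r0 ^ 2) * (Real.log (t + r0 ^ 2) - 1) - t * (Real.log t - 1)) / 2 := by
  have hderiv : ∀ r ∈ Set.uIcc (0:ℝ) r0,
      HasDerivAt (fun r : ℝ => (t + r ^ 2) * (Real.log (t + r ^ 2) - 1) / 2)
        (r * Real.log (t + r ^ 2)) r := by
    intro r _
    have hne : (t + r ^ 2) ≠ 0 := by positivity
    have h1 : HasDerivAt (fun r : ℝ => t + r ^ 2) (2 * r) r := by
      have := (hasDerivAt_pow 2 r).const_add t
      simpa using this
    have hlog := h1.log hne
    have h2 := (h1.mul (hlog.sub_const 1)).div_const 2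
    refine h2.congr_deriv ?_
    field_simp
    ring
  have hcont : Continuous fun r : ℝ => r * Real.log (t + r ^ 2) := by
    apply continuous_id.mul
    apply Continuous.log (by fun_prop)
    intro r; positivity
  rw [intervalIntegral.integral_eq_sub_of_hasDerivAt hderiv
    (hcont.intervalIntegrable 0 r0)]
  simp [Real.log_eq_zero]
  ring

end Aux

/-- log ∫_B e^{v_ε} = log(1/ε²) + O(1). -/
theorem stmt_12 (r0 : ℝ) (hr : 0 < r0) :
    ∃ C > 0, ∀ ε ∈ Set.Ioc (0:ℝ) 1,
      |Real.log (∫ x in Metric.ball (0 : EuclideanSpace ℝ (Fin 2)) r0,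
          Real.exp (nbubble r0 ε x)) - Real.log (1 / ε ^ 2)| ≤ C := by
  classical
  set K1 := |Real.log (r0 ^ 2)| + |Real.log (1 + r0 ^ 2)| with hK1
  refine ⟨(2 / r0 ^ 2) * ((1 + r0 ^ 2) * (K1 + 1) + 2) + |Real.log (π * r0 ^ 2)| + K1 + 1,
    by positivity, ?_⟩
  rintro ε ⟨hε, hε1⟩
  set t := ε ^ 2 with htdef
  have ht : 0 < t := by positivity
  have ht1 : t ≤ 1 := by nlinarith
  have htr : 0 < t + r0 ^ 2 := by positivity
  set B := Metric.ball (0 : EuclideanSpace ℝ (Fin 2)) r0 with hB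
  set X := (t + r0 ^ 2) * (Real.log (t + r0 ^ 2) - 1) - t * (Real.log t - 1) with hX
  -- pointwise facts
  have hbub : ∀ x : EuclideanSpace ℝ (Fin 2),
      bubble ε x = Real.log t - 2 * Real.log (t + ‖x‖ ^ 2) := by
    intro x
    show Real.log (ε ^ 2 / (ε ^ 2 + ‖x‖ ^ 2) ^ 2) = Real.log t - 2 * Real.log (t + ‖x‖ ^ 2)
    rw [htdef, Real.log_div (by positivity) (by positivity), Real.log_pow, Real.log_pow]
    push_cast
    ring
  have hexp : ∀ x : EuclideanSpace ℝ (Fin 2),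
      Real.exp (bubble ε x) = t / (t + ‖x‖ ^ 2) ^ 2 := by
    intro x
    show Real.exp (Real.log (ε ^ 2 / (ε ^ 2 + ‖x‖ ^ 2) ^ 2)) = t / (t + ‖x‖ ^ 2) ^ 2
    rw [htdef]
    exact Real.exp_log (by positivity)
  -- integrals via polar coordinates
  have hJ : ∫ x in B, Real.log (t + ‖x‖ ^ 2) = 2 * π * (X / 2) := by
    have h := polar2 r0 hr (fun s => Real.log (t + s ^ 2))
    rw [hB, h, intB t r0 ht, hX]
  have hI : ∫ x in B, Real.exp (bubble ε x) = π * r0 ^ 2 / (t + r0 ^ 2) := by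
    have h := polar2 r0 hr (fun s => t / (t + s ^ 2) ^ 2)
    calc ∫ x in B, Real.exp (bubble ε x)
        = ∫ x in B, (fun s => t / (t + s ^ 2) ^ 2) ‖x‖ := by
          apply MeasureTheory.integral_congr_ae
          filter_upwards with x using hexp x
      _ = (2 * π) * ∫ r in (0:ℝ)..r0, r * (t / (t + r ^ 2) ^ 2) := by rw [hB]; exact h
      _ = π * r0 ^ 2 / (t + r0 ^ 2) := by
          rw [intA t r0 ht hr]
          field_simp
  -- integrability of the log term
  have hIntLog : MeasureTheory.IntegrableOn
      (fun x : EuclideanSpace ℝ (Fin 2) => Real.log (t + ‖x‖ ^ 2)) B := by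
    have hc : Continuous fun x : EuclideanSpace ℝ (Fin 2) => Real.log (t + ‖x‖ ^ 2) :=
      Continuous.log (by fun_prop) (fun x => by positivity)
    exact (hc.locallyIntegrable.integrableOn_isCompact
      (isCompact_closedBall 0 r0)).mono_set Metric.ball_subset_closedBall
  -- the integral of the bubble
  have hUb : ∫ x in B, bubble ε x
      = π * r0 ^ 2 * Real.log t - 2 * ∫ x in B, Real.log (t + ‖x‖ ^ 2) := by
    have heq : (fun x : EuclideanSpace ℝ (Fin 2) => bubble ε x)
        = fun x => Real.log t - 2 * Real.log (t + ‖x‖ ^ 2) := funext hbub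
    rw [heq, MeasureTheory.integral_sub
        (MeasureTheory.integrableOn_const (C := Real.log t) (s := B) (μ := MeasureTheory.volume)
          MeasureTheory.measure_ball_lt_top.ne)
        (hIntLog.const_mul 2),
      MeasureTheory.integral_const_mul, MeasureTheory.setIntegral_const, hB,
      MeasureTheory.measureReal_def, vol_ball2 r0 hr.le, smul_eq_mul]
  set m := (π * r0 ^ 2)⁻¹ * ∫ x in B, bubble ε x with hm
  have hmval : m = Real.log t - (2 / r0 ^ 2) * X := by
    rw [hm, hUb, hJ]
    field_simp
  -- the integral of exp (nbubble)
  have hV : ∫ x in B, Real.exp (nbubble r0 ε x)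
      = (π * r0 ^ 2 / (t + r0 ^ 2)) * Real.exp (-m) := by
    have heq : (fun x : EuclideanSpace ℝ (Fin 2) => Real.exp (nbubble r0 ε x))
        = fun x => Real.exp (bubble ε x) * Real.exp (-m) := by
      funext x
      rw [nbubble, ← Real.exp_add, ← hB, ← hm]
      ring_nf
    rw [heq, MeasureTheory.integral_mul_const, hI]
  -- rewrite the target
  rw [hV, Real.log_mul (by positivity) (Real.exp_ne_zero _), Real.log_exp,
    one_div, Real.log_inv]
  have hexpr : Real.log (π * r0 ^ 2 / (t + r0 ^ 2)) + -m - -Real.log t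
      = (2 / r0 ^ 2) * X + (Real.log (π * r0 ^ 2) - Real.log (t + r0 ^ 2)) := by
    rw [hmval, Real.log_div (by positivity) htr.ne']
    ring
  rw [hexpr]
  -- bounds
  have hL : |Real.log (t + r0 ^ 2)| ≤ K1 := by
    have h1 : Real.log (r0 ^ 2) ≤ Real.log (t + r0 ^ 2) :=
      Real.log_le_log (by positivity) (by linarith)
    have h2 : Real.log (t + r0 ^ 2) ≤ Real.log (1 + r0 ^ 2) :=
      Real.log_le_log (by positivity) (by linarith)
    rw [abs_le]
    constructor
    · have := neg_abs_le (Real.log (r0 ^ 2))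
      have := abs_nonneg (Real.log (1 + r0 ^ 2))
      rw [hK1]; linarith
    · have := le_abs_self (Real.log (1 + r0 ^ 2))
      have := abs_nonneg (Real.log (r0 ^ 2))
      rw [hK1]; linarith
  have htlog : -(t * Real.log t) ≤ 1 := by
    have h1 : Real.log t⁻¹ ≤ t⁻¹ - 1 := Real.log_le_sub_one_of_pos (by positivity)
    have h2 : Real.log t⁻¹ = -Real.log t := Real.log_inv t
    have h3 : -Real.log t ≤ t⁻¹ := by rw [← h2]; linarith
    have h4 : t * (-Real.log t) ≤ t * t⁻¹ := by
      exact mul_le_mul_of_nonneg_left h3 ht.le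
    rw [mul_inv_cancel₀ ht.ne'] at h4
    linarith
  have hlt0 : Real.log t ≤ 0 := Real.log_nonpos ht.le ht1
  have hXb : |X| ≤ (1 + r0 ^ 2) * (K1 + 1) + 2 := by
    have h1 : |(t + r0 ^ 2) * (Real.log (t + r0 ^ 2) - 1)| ≤ (1 + r0 ^ 2) * (K1 + 1) := by
      rw [abs_mul, abs_of_pos htr]
      have hb : |Real.log (t + r0 ^ 2) - 1| ≤ K1 + 1 := by
        have := abs_sub_abs_le_abs_sub (Real.log (t + r0 ^ 2)) (1:ℝ)
        have h := abs_le.1 hL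
        rw [abs_le]
        constructor <;> cases abs_cases (Real.log (t + r0 ^ 2) - 1) <;> linarith
      have hle : t + r0 ^ 2 ≤ 1 + r0 ^ 2 := by linarith
      exact mul_le_mul hle hb (abs_nonneg _) (by positivity)
    have h2 : |t * (Real.log t - 1)| ≤ 2 := by
      rw [abs_mul, abs_of_nonneg ht.le, abs_of_nonpos (by linarith)]
      nlinarith
    have htri : |X| ≤ |(t + r0 ^ 2) * (Real.log (t + r0 ^ 2) - 1)|
        + |t * (Real.log t - 1)| := by
      rw [hX, sub_eq_add_neg]
      exact (abs_add_le _ _).trans (by rw [abs_neg])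
    linarith
  have h2r : (0:ℝ) < 2 / r0 ^ 2 := by positivity
  calc |(2 / r0 ^ 2) * X + (Real.log (π * r0 ^ 2) - Real.log (t + r0 ^ 2))|
      ≤ |(2 / r0 ^ 2) * X| + |Real.log (π * r0 ^ 2) - Real.log (t + r0 ^ 2)| := abs_add_le _ _
    _ ≤ (2 / r0 ^ 2) * |X| + (|Real.log (π * r0 ^ 2)| + |Real.log (t + r0 ^ 2)|) := by
        rw [abs_mul, abs_of_pos h2r, sub_eq_add_neg]
        gcongr
        exact (abs_add_le _ _).trans (by rw [abs_neg])
    _ ≤ (2 / r0 ^ 2) * ((1 + r0 ^ 2) * (K1 + 1) + 2) + |Real.log (π * r0 ^ 2)| + K1 + 1 := by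
        have := mul_le_mul_of_nonneg_left hXb h2r.le
        linarith
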